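/- With V = B a quaternion algebra with form Q = α·ν, the map B× × B× → GO(V), (b₁,b₂) ↦ ρ(b₁,b₂) where ρ(b₁,b₂)x = b₁xb₂⁻¹, is a group homomorphism whose kernel is the set of pairs (t,t) with t in the center k× of B×. -/
import Mathlib


/-- `(b₁,b₂) ↦ ρ(b₁,b₂)`, `ρ(b₁,b₂)x = b₁xb₂⁻¹`, is a group homomorphism
from `B× × B×` to `GO(V)` (it lands in the similitudes of `Q = α·ν`), and its kernel
is the set of pairs `(t,t)` with `t` a central scalar in `k×`.  Here `B` is a
quaternion algebra, in particular a central `k`-algebra. -/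
theorem rho_hom_and_kernel (k B : Type*) [Field k] [Ring B] [Algebra k B]
    (hcentral : ∀ z : B, (∀ x : B, z * x = x * z) → ∃ t : k, z = algebraMap k B t)
    (ν : B → k) (hν1 : ν 1 = 1) (hνmul : ∀ x y : B, ν (x * y) = ν x * ν y)
    (α : k) (hα : α ≠ 0)
    (ρ : Bˣ × Bˣ → B → B) (hρ : ∀ p x, ρ p x = (p.1 : B) * x * ((p.2⁻¹ : Bˣ) : B)) :
    (∀ p : Bˣ × Bˣ, ∃ c : k, c ≠ 0 ∧ ∀ x : B, α * ν (ρ p x) = c * (α * ν x)) ∧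
    (∀ p q : Bˣ × Bˣ, ρ (p * q) = ρ p ∘ ρ q) ∧
    (ρ 1 = id) ∧
    (∀ p : Bˣ × Bˣ, ρ p = id ↔
      ∃ t : kˣ, (p.1 : B) = algebraMap k B (t : k) ∧ p.2 = p.1) := by
  have hνu : ∀ u : Bˣ, ν (u : B) ≠ 0 := by
    intro u h
    have h1 : ν ((u : B) * ((u⁻¹ : Bˣ) : B)) = ν (u : B) * ν ((u⁻¹ : Bˣ) : B) := hνmul _ _
    rw [Units.mul_inv, hν1, h, zero_mul] at h1
    exact one_ne_zero h1
  refine ⟨?_, ?_, ?_, ?_⟩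
  · intro p
    refine ⟨ν (p.1 : B) * ν ((p.2⁻¹ : Bˣ) : B), mul_ne_zero (hνu _) (hνu _), fun x => ?_⟩
    rw [hρ, hνmul, hνmul]
    ring
  · intro p q
    funext x
    simp only [hρ, Function.comp_apply, Prod.fst_mul, Prod.snd_mul, mul_inv_rev,
      Units.val_mul, mul_assoc]
  · funext x
    simp [hρ]
  · intro p
    constructor
    · intro h
      have h1 : ∀ x : B, (p.1 : B) * x * ((p.2⁻¹ : Bˣ) : B) = x := by
        intro x
        have := congrFun h x
        rwa [hρ] at this
      have he : (p.1 : B) * ((p.2⁻¹ : Bˣ) : B) = 1 := by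
        have := h1 1
        rwa [mul_one] at this
      have hpe : p.2 = p.1 := by
        apply Units.ext
        calc (p.2 : B) = ((p.1 : B) * ((p.2⁻¹ : Bˣ) : B)) * p.2 := by rw [he, one_mul]
        _ = (p.1 : B) * (((p.2⁻¹ : Bˣ) : B) * p.2) := by rw [mul_assoc]
        _ = p.1 := by rw [Units.inv_mul, mul_one]
      have hc : ∀ x : B, (p.1 : B) * x = x * (p.1 : B) := by
        intro x
        have := h1 x
        rw [hpe] at this
        calc (p.1 : B) * x = ((p.1 : B) * x * ((p.1⁻¹ : Bˣ) : B)) * p.1 := by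
              rw [mul_assoc, Units.inv_mul, mul_one]
        _ = x * p.1 := by rw [this]
      obtain ⟨t, ht⟩ := hcentral _ hc
      by_cases ht0 : t = 0
      · have h0 : (1 : B) = 0 := by
          have : (p.1 : B) = 0 := by rw [ht, ht0, map_zero]
          calc (1 : B) = ((p.1⁻¹ : Bˣ) : B) * p.1 := (Units.inv_mul _).symm
          _ = 0 := by rw [this, mul_zero]
        have : Subsingleton B := subsingleton_of_zero_eq_one h0.symm
        exact ⟨1, Subsingleton.elim _ _, Units.ext (Subsingleton.elim _ _)⟩
      · exact ⟨Units.mk0 t ht0, ht, hpe⟩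
    · rintro ⟨t, ht1, ht2⟩
      funext x
      have comm : (p.1 : B) * x = x * (p.1 : B) := by
        rw [ht1]; exact Algebra.commutes (t : k) x
      show ρ p x = x
      rw [hρ, ht2, comm, mul_assoc, Units.mul_inv, mul_one]
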